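/- Let k be a finite-dimensional Lie algebra such that Y(k) (the algebra of invariants in Sym(k)) is a UFD. Let λ ∈ Λ(k) be a nonzero weight of a semi-invariant x that is irreducible in Sym(k). Then at least one of the Y(k)-modules Sym(k)_λ and Sym(k)_{−λ} is free of rank ≤ 1 (i.e., is either 0 or generated by a single element over Y(k)). -/

import Mathlib

open MvPolynomial

/-- The algebra of invariants `Y(k) ⊆ Sym(k)`. -/
def invariantAlgebra {K L ι : Type*} [Field K] [LieRing L] [LieAlgebra K L]
    (D : L → Derivation K (MvPolynomial ι K) (MvPolynomial ι K)) :
    Subalgebra K (MvPolynomial ι K) where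
  carrier := {f | ∀ x : L, D x f = 0}
  mul_mem' := by
    intro a b ha hb x
    rw [Derivation.leibniz, ha x, hb x, smul_zero, smul_zero, add_zero]
  add_mem' := by
    intro a b ha hb x
    rw [map_add, ha x, hb x, add_zero]
  algebraMap_mem' := by
    intro c x
    exact Derivation.map_algebraMap (D x) c

/-- If `Y(k)` is a UFD and `λ ≠ 0` is the weight of a semi-invariant which is
irreducible in `Sym(k)`, then one of the `Y(k)`-modules `Sym(k)_λ`, `Sym(k)_{-λ}` is free
of rank at most one, i.e. zero or generated by a single element over `Y(k)`. -/
theorem weight_space_free_of_rank_le_one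
    {K L ι : Type*} [Field K] [IsAlgClosed K] [CharZero K]
    [LieRing L] [LieAlgebra K L] [FiniteDimensional K L] [Fintype ι]
    (b : Module.Basis ι K L)
    (D : L → Derivation K (MvPolynomial ι K) (MvPolynomial ι K))
    (hD : ∀ (x : L) (i : ι), D x (X i) = ∑ j, (b.repr ⁅x, b i⁆) j • X j)
    (hUFD : UniqueFactorizationMonoid ↥(invariantAlgebra D))
    (lam : Module.Dual K L) (hlam : lam ≠ 0)
    (v : MvPolynomial ι K) (hirr : Irreducible v)
    (hv : ∀ x : L, D x v = lam x • v) :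
    (∃ g : MvPolynomial ι K, ∀ s : MvPolynomial ι K,
        (∀ x : L, D x s = lam x • s) →
        ∃ y : MvPolynomial ι K, (∀ x : L, D x y = 0) ∧ s = y * g) ∨
    (∃ g : MvPolynomial ι K, ∀ s : MvPolynomial ι K,
        (∀ x : L, D x s = (-lam) x • s) →
        ∃ y : MvPolynomial ι K, (∀ x : L, D x y = 0) ∧ s = y * g) := by
  classical
  haveI := hUFD
  have hv0 : v ≠ 0 := hirr.ne_zero
  have hvprime : Prime v := (UniqueFactorizationMonoid.irreducible_iff_prime).mp hirr
  by_cases hA : ∀ s : MvPolynomial ι K, (∀ x : L, D x s = lam x • s) → v ∣ s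
  · left
    refine ⟨v, fun s hs => ?_⟩
    obtain ⟨c, rfl⟩ := hA s hs
    refine ⟨c, fun x => ?_, mul_comm v c⟩
    have h1 := hs x
    rw [Derivation.leibniz, smul_eq_mul, smul_eq_mul, hv x, mul_smul_comm,
      mul_comm c v] at h1
    have h2 : v * D x c = 0 := add_eq_right.mp h1
    exact (mul_eq_zero.mp h2).resolve_left hv0
  push_neg at hA
  obtain ⟨s, hsw, hvs⟩ := hA
  by_cases hB : ∀ t : MvPolynomial ι K, (∀ x : L, D x t = (-lam) x • t) → t = 0
  · right
    exact ⟨0, fun t ht => ⟨0, fun x => map_zero _, by rw [hB t ht, zero_mul]⟩⟩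
  push_neg at hB
  obtain ⟨u, hu, hu0⟩ := hB
  -- products of opposite-weight semi-invariants are invariant
  have hmem : ∀ (a b2 : MvPolynomial ι K), (∀ x : L, D x a = lam x • a) →
      (∀ x : L, D x b2 = (-lam) x • b2) → a * b2 ∈ invariantAlgebra D := by
    intro a b2 ha hb x
    show D x (a * b2) = 0
    rw [Derivation.leibniz, smul_eq_mul, smul_eq_mul, ha x, hb x, mul_smul_comm,
      mul_smul_comm, mul_comm b2 a, LinearMap.neg_apply, neg_smul, neg_add_cancel]
  set Y := invariantAlgebra D with hYdef
  let vu : Y := ⟨v * u, hmem v u hv hu⟩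
  have hvu0 : vu ≠ 0 := fun h => mul_ne_zero hv0 hu0 (congrArg Subtype.val h)
  obtain ⟨c, hc⟩ := UniqueFactorizationMonoid.factors_prod hvu0
  -- hc : (factors vu).prod * c = vu
  have hcS : ((UniqueFactorizationMonoid.factors vu).prod : MvPolynomial ι K) * ((c : Y) : MvPolynomial ι K) = v * u :=
    congrArg Subtype.val hc
  have hdvd1 : v ∣ ((UniqueFactorizationMonoid.factors vu).prod : MvPolynomial ι K) * ((c : Y) : MvPolynomial ι K) := by
    rw [hcS]; exact ⟨u, rfl⟩
  have hdvd2 : v ∣ ((UniqueFactorizationMonoid.factors vu).prod : MvPolynomial ι K) := by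
    rcases hvprime.2.2 _ _ hdvd1 with h | h
    · exact h
    · exact absurd (isUnit_of_dvd_unit h ((c.isUnit).map Y.val)) hirr.not_isUnit
  have hdvd3 : v ∣ ((UniqueFactorizationMonoid.factors vu).map Y.val).prod := by
    rwa [← map_multiset_prod]
  obtain ⟨qs, hqsmem, hqdvd⟩ := hvprime.exists_mem_multiset_dvd hdvd3
  obtain ⟨q, hqmem, rfl⟩ := Multiset.mem_map.mp hqsmem
  have hqirr : Irreducible q := UniqueFactorizationMonoid.irreducible_of_factor q hqmem
  have hqprime : Prime q := (UniqueFactorizationMonoid.irreducible_iff_prime).mp hqirr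
  obtain ⟨w, hw⟩ := hqdvd
  -- hw : Y.val q = v * w
  have hq0 : (q : MvPolynomial ι K) ≠ 0 := fun h => hqprime.ne_zero (Subtype.ext h)
  have hw0 : w ≠ 0 := by
    intro h
    apply hq0
    rw [show ((q : MvPolynomial ι K)) = v * w from hw, h, mul_zero]
  have hww : ∀ x : L, D x w = (-lam) x • w := by
    intro x
    have h := q.2 x
    rw [show ((q : MvPolynomial ι K)) = v * w from hw] at h
    rw [Derivation.leibniz, smul_eq_mul, smul_eq_mul, hv x, mul_smul_comm,
      mul_comm w v, ← mul_smul_comm, ← mul_add] at h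
    have h2 : D x w + lam x • w = 0 := (mul_eq_zero.mp h).resolve_left hv0
    rw [LinearMap.neg_apply, neg_smul]
    exact eq_neg_of_add_eq_zero_left h2
  right
  refine ⟨w, fun t ht => ?_⟩
  have hqd : q ∣ (⟨v * t, hmem v t hv ht⟩ * ⟨s * w, hmem s w hsw hww⟩ : Y) := by
    refine ⟨⟨s * t, hmem s t hsw ht⟩, ?_⟩
    apply Subtype.ext
    show (v * t) * (s * w) = (q : MvPolynomial ι K) * (s * t)
    rw [show ((q : MvPolynomial ι K)) = v * w from hw]
    ring
  rcases hqprime.2.2 _ _ hqd with hcase | hcase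
  · obtain ⟨h, hh⟩ := hcase
    have hhS : v * t = (v * w) * (h : MvPolynomial ι K) := by
      have := congrArg Subtype.val hh
      simp only [MulMemClass.coe_mul] at this
      rw [show ((q : MvPolynomial ι K)) = v * w from hw] at this
      exact this
    have ht' : t = (h : MvPolynomial ι K) * w := by
      apply mul_left_cancel₀ hv0
      rw [hhS]; ring
    exact ⟨(h : MvPolynomial ι K), h.2, ht'⟩
  · exfalso
    obtain ⟨h, hh⟩ := hcase
    have hhS : s * w = (v * w) * (h : MvPolynomial ι K) := by
      have := congrArg Subtype.val hh
      simp only [MulMemClass.coe_mul] at this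
      rw [show ((q : MvPolynomial ι K)) = v * w from hw] at this
      exact this
    apply hvs
    refine ⟨(h : MvPolynomial ι K), ?_⟩
    apply mul_right_cancel₀ hw0
    rw [hhS]; ring
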